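/- Let A be a nonempty finite set, λ > 0, and for y : A → ℝ define p_y = argmax_{q ∈ Δ(A)} (⟨q, y⟩ − λ R(q)), which equals the softmax p_y(a) = exp(y(a)/λ)/Σ_{a′} exp(y(a′)/λ). Then for all y₁, y₂ : A → ℝ, ‖p_{y₁} − p_{y₂}‖₁ ≤ (1/λ) ‖y₁ − y₂‖_∞. -/

import Mathlib

open Finset

set_option maxHeartbeats 1000000

/-- The softmax map `y ↦ p_y`, `p_y a = exp (y a / λ) / ∑ a', exp (y a' / λ)` (which is
the maximizer of `q ↦ ⟨q, y⟩ - λ R(q)` over the simplex, `R` being negative entropy), is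
`(1 / λ)`-Lipschitz from `ℓ∞` to `ℓ₁`:
`‖p_{y₁} - p_{y₂}‖₁ ≤ (1 / λ) ‖y₁ - y₂‖∞`. -/
theorem softmax_lipschitz {A : Type*} [Fintype A] [Nonempty A]
    (lam : ℝ) (hlam : 0 < lam) (y₁ y₂ : A → ℝ) :
    ∑ a, |Real.exp (y₁ a / lam) / (∑ a', Real.exp (y₁ a' / lam))
          - Real.exp (y₂ a / lam) / (∑ a', Real.exp (y₂ a' / lam))|
      ≤ (1 / lam) * (Finset.univ.sup' Finset.univ_nonempty fun a => |y₁ a - y₂ a|) := by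
  classical
  set M : ℝ := Finset.univ.sup' Finset.univ_nonempty fun a => |y₁ a - y₂ a| with hMdef
  have hMa : ∀ a : A, |y₁ a - y₂ a| ≤ M := by
    intro a
    rw [hMdef]
    exact Finset.le_sup' (fun a => |y₁ a - y₂ a|) (Finset.mem_univ a)
  have hM0 : 0 ≤ M := le_trans (abs_nonneg _) (hMa (Classical.arbitrary A))
  set w : A → ℝ := fun a => (y₁ a - y₂ a) / lam with hwdef
  have hwa : ∀ a, |w a| ≤ M / lam := by
    intro a
    rw [hwdef]
    simp only [abs_div, abs_of_pos hlam]
    exact div_le_div_of_nonneg_right (hMa a) hlam.le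
  set E : A → ℝ → ℝ := fun a t => Real.exp ((y₂ a + t * (y₁ a - y₂ a)) / lam) with hEdef
  set N : ℝ → ℝ := fun t => ∑ a, E a t with hNdef
  have hEpos : ∀ a t, 0 < E a t := fun a t => Real.exp_pos _
  have hNpos : ∀ t, 0 < N t := fun t =>
    Finset.sum_pos (fun a _ => hEpos a t) Finset.univ_nonempty
  set p : A → ℝ → ℝ := fun a t => E a t / N t with hpdef
  set ε : A → ℝ := fun a => if p a 0 ≤ p a 1 then 1 else -1 with hεdef
  have hεsq : ∀ a, (ε a) ^ 2 = 1 := by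
    intro a; by_cases h : p a 0 ≤ p a 1 <;> simp [hεdef, h]
  set g : ℝ → ℝ := fun t => ∑ a, ε a * p a t with hgdef
  -- derivatives
  have hE' : ∀ a t, HasDerivAt (E a) (w a * E a t) t := by
    intro a t
    have h1 : HasDerivAt (fun t : ℝ => (y₂ a + t * (y₁ a - y₂ a)) / lam)
        ((1 * (y₁ a - y₂ a)) / lam) t :=
      (((hasDerivAt_id t).mul_const (y₁ a - y₂ a)).const_add (y₂ a)).div_const lam
    have h2 := h1.exp
    rw [hEdef]
    simpa [mul_comm, hwdef] using h2
  have hN' : ∀ t, HasDerivAt N (∑ a, w a * E a t) t := fun t =>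
    HasDerivAt.fun_sum fun a _ => hE' a t
  have hp' : ∀ a t, HasDerivAt (p a)
      ((w a * E a t * N t - E a t * (∑ b, w b * E b t)) / (N t) ^ 2) t := by
    intro a t
    exact (hE' a t).div (hN' t) (hNpos t).ne'
  set D : ℝ → ℝ := fun t => ∑ a, ε a *
      ((w a * E a t * N t - E a t * (∑ b, w b * E b t)) / (N t) ^ 2) with hDdef
  have hg' : ∀ t, HasDerivAt g (D t) t := fun t =>
    HasDerivAt.fun_sum fun a _ => (hp' a t).const_mul (ε a)
  -- mean value theorem
  obtain ⟨ξ, -, hξ⟩ := exists_hasDerivAt_eq_slope g D (by norm_num : (0:ℝ) < 1)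
    (fun t _ => (hg' t).continuousAt.continuousWithinAt) (fun t _ => hg' t)
  have hslope : g 1 - g 0 = D ξ := by
    rw [hξ]; ring
  -- bound D ξ
  set q : A → ℝ := fun a => E a ξ / N ξ with hqdef
  have hq0 : ∀ a, 0 ≤ q a := fun a => le_of_lt (div_pos (hEpos a ξ) (hNpos ξ))
  have hqsum : ∑ a, q a = 1 := by
    rw [hqdef]
    rw [← Finset.sum_div]
    exact div_self (hNpos ξ).ne'
  set m : ℝ := ∑ b, q b * w b with hmdef
  have hterm : ∀ a, (w a * E a ξ * N ξ - E a ξ * (∑ b, w b * E b ξ)) / (N ξ) ^ 2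
      = q a * (w a - m) := by
    intro a
    have hN : N ξ ≠ 0 := (hNpos ξ).ne'
    have hsum : (∑ b, w b * E b ξ) = m * N ξ := by
      rw [hmdef, Finset.sum_mul]
      refine Finset.sum_congr rfl fun b _ => ?_
      simp only [hqdef]
      field_simp
    rw [hsum]
    simp only [hqdef]
    field_simp
  have hDval : D ξ = ∑ a, ε a * (q a * (w a - m)) := by
    rw [hDdef]
    exact Finset.sum_congr rfl fun a _ => by rw [hterm a]
  -- Cauchy–Schwarz
  have hCS : (D ξ) ^ 2 ≤ (∑ a, q a * (ε a) ^ 2) * (∑ a, q a * (w a - m) ^ 2) := by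
    rw [hDval]
    have h := Finset.sum_mul_sq_le_sq_mul_sq Finset.univ
      (fun a => ε a * Real.sqrt (q a)) (fun a => Real.sqrt (q a) * (w a - m))
    have e1 : ∀ a : A, ε a * Real.sqrt (q a) * (Real.sqrt (q a) * (w a - m))
        = ε a * (q a * (w a - m)) := by
      intro a
      have hs : Real.sqrt (q a) * Real.sqrt (q a) = q a := Real.mul_self_sqrt (hq0 a)
      calc ε a * Real.sqrt (q a) * (Real.sqrt (q a) * (w a - m))
          = (Real.sqrt (q a) * Real.sqrt (q a)) * (ε a * (w a - m)) := by ring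
        _ = ε a * (q a * (w a - m)) := by rw [hs]; ring
    have e2 : ∀ a : A, (ε a * Real.sqrt (q a)) ^ 2 = q a * (ε a) ^ 2 := by
      intro a
      rw [mul_pow, Real.sq_sqrt (hq0 a)]; ring
    have e3 : ∀ a : A, (Real.sqrt (q a) * (w a - m)) ^ 2 = q a * (w a - m) ^ 2 := by
      intro a
      rw [mul_pow, Real.sq_sqrt (hq0 a)]
    calc (∑ a, ε a * (q a * (w a - m))) ^ 2
        = (∑ a, ε a * Real.sqrt (q a) * (Real.sqrt (q a) * (w a - m))) ^ 2 := by
          congr 1; exact Finset.sum_congr rfl fun a _ => (e1 a).symm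
      _ ≤ (∑ a, (ε a * Real.sqrt (q a)) ^ 2) * (∑ a, (Real.sqrt (q a) * (w a - m)) ^ 2) := h
      _ = (∑ a, q a * (ε a) ^ 2) * (∑ a, q a * (w a - m) ^ 2) := by
          congr 1
          · exact Finset.sum_congr rfl fun a _ => e2 a
          · exact Finset.sum_congr rfl fun a _ => e3 a
  have h1 : (∑ a, q a * (ε a) ^ 2) = 1 := by
    rw [← hqsum]
    exact Finset.sum_congr rfl fun a _ => by rw [hεsq a, mul_one]
  -- variance bound
  have hvar : (∑ a, q a * (w a - m) ^ 2) ≤ (M / lam) ^ 2 := by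
    have expand : (∑ a, q a * (w a - m) ^ 2) = (∑ a, q a * (w a) ^ 2) - m ^ 2 := by
      have : ∀ a : A, q a * (w a - m) ^ 2
          = q a * (w a) ^ 2 - 2 * m * (q a * w a) + m ^ 2 * q a := by
        intro a; ring
      rw [Finset.sum_congr rfl fun a _ => this a]
      rw [Finset.sum_add_distrib, Finset.sum_sub_distrib, ← Finset.mul_sum,
        ← Finset.mul_sum, ← hmdef, hqsum]
      ring
    have hw2 : (∑ a, q a * (w a) ^ 2) ≤ (M / lam) ^ 2 := by
      calc (∑ a, q a * (w a) ^ 2) ≤ ∑ a, q a * (M / lam) ^ 2 := by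
            refine Finset.sum_le_sum fun a _ => ?_
            refine mul_le_mul_of_nonneg_left ?_ (hq0 a)
            have := hwa a
            calc (w a) ^ 2 = |w a| ^ 2 := (sq_abs _).symm
              _ ≤ (M / lam) ^ 2 := by
                  refine pow_le_pow_left₀ (abs_nonneg _) this 2
        _ = (M / lam) ^ 2 := by rw [← Finset.sum_mul, hqsum, one_mul]
    calc (∑ a, q a * (w a - m) ^ 2) = (∑ a, q a * (w a) ^ 2) - m ^ 2 := expand
      _ ≤ (∑ a, q a * (w a) ^ 2) := by nlinarith [sq_nonneg m]
      _ ≤ (M / lam) ^ 2 := hw2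
  have hDsq : (D ξ) ^ 2 ≤ (M / lam) ^ 2 := by
    calc (D ξ) ^ 2 ≤ (∑ a, q a * (ε a) ^ 2) * (∑ a, q a * (w a - m) ^ 2) := hCS
      _ = (∑ a, q a * (w a - m) ^ 2) := by rw [h1, one_mul]
      _ ≤ (M / lam) ^ 2 := hvar
  have hDle : D ξ ≤ M / lam := by
    have hMl : 0 ≤ M / lam := div_nonneg hM0 hlam.le
    nlinarith [hDsq, hMl]
  -- identify g 1 - g 0 with the LHS
  have hp1 : ∀ a, p a 1 = Real.exp (y₁ a / lam) / ∑ a', Real.exp (y₁ a' / lam) := by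
    intro a
    have key : ∀ b : A, y₂ b + 1 * (y₁ b - y₂ b) = y₁ b := fun b => by ring
    simp only [hpdef, hEdef, hNdef, key]
  have hp0 : ∀ a, p a 0 = Real.exp (y₂ a / lam) / ∑ a', Real.exp (y₂ a' / lam) := by
    intro a
    have key : ∀ b : A, y₂ b + 0 * (y₁ b - y₂ b) = y₂ b := fun b => by ring
    simp only [hpdef, hEdef, hNdef, key]
  have habs : ∀ a, |p a 1 - p a 0| = ε a * (p a 1 - p a 0) := by
    intro a
    by_cases h : p a 0 ≤ p a 1
    · simp only [hεdef, h, if_true]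
      rw [one_mul, abs_of_nonneg (by linarith)]
    · simp only [hεdef, h, if_false]
      push_neg at h
      rw [abs_of_neg (by linarith), neg_one_mul]
  have hLHS : (∑ a, |Real.exp (y₁ a / lam) / (∑ a', Real.exp (y₁ a' / lam))
          - Real.exp (y₂ a / lam) / (∑ a', Real.exp (y₂ a' / lam))|) = g 1 - g 0 := by
    rw [hgdef]
    simp only [← Finset.sum_sub_distrib, ← mul_sub]
    refine Finset.sum_congr rfl fun a _ => ?_
    rw [← hp1 a, ← hp0 a, habs a]
  rw [hLHS, hslope]
  calc D ξ ≤ M / lam := hDle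
    _ = (1 / lam) * M := by ring
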